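/- For all integers n ≥ 1 and 0 ≤ r ≤ n−1: ∑_{j=0}^{r} (−1)^{r−j} C(n−1−j, r−j) · 2^j · C(n,j) = ∑_{i=0}^{r} C(n,i). -/

import Mathlib

open Finset

/-- Key auxiliary identity: for `m < N`,
`∑_{k=0}^{m} (−1)^{m−k} C(N,k) C(N−1−k, m−k) = 1`. -/
lemma aux16 : ∀ (m N : ℕ), m + 1 ≤ N →
    ∑ k ∈ Finset.range (m + 1),
        (-1 : ℤ) ^ (m - k) * (N.choose k) * ((N - 1 - k).choose (m - k)) = 1 := by
  intro m
  induction m with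
  | zero => intro N h; simp
  | succ m ih =>
    intro N h
    obtain ⟨M, rfl⟩ : ∃ M, N = M + 1 := ⟨N - 1, by omega⟩
    have hM : m + 1 ≤ M := by omega
    -- split (M+1).choose k = M.choose k + M.choose (k-1) termwise via sum_range_succ'
    have hsplit : ∀ k ∈ Finset.range (m + 2),
        (-1 : ℤ) ^ (m + 1 - k) * ((M + 1).choose k) * ((M + 1 - 1 - k).choose (m + 1 - k))
        = (-1 : ℤ) ^ (m + 1 - k) * (M.choose k) * ((M - k).choose (m + 1 - k))
          + (-1 : ℤ) ^ (m + 1 - k) * (if k = 0 then 0 else (M.choose (k - 1) : ℤ))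
              * ((M - k).choose (m + 1 - k)) := by
      intro k hk
      rcases k with _ | k
      · simp
      · have e : M + 1 - 1 - (k + 1) = M - (k + 1) := by omega
        rw [e, Nat.choose_succ_succ]
        simp only [Nat.succ_ne_zero, if_false, Nat.add_sub_cancel]
        push_cast
        ring
    rw [Finset.sum_congr rfl hsplit, Finset.sum_add_distrib]
    have h1 : ∑ k ∈ Finset.range (m + 2),
        (-1 : ℤ) ^ (m + 1 - k) * (M.choose k) * ((M - k).choose (m + 1 - k)) = 0 := by
      have key : ∀ k ∈ Finset.range (m + 2),
          (-1 : ℤ) ^ (m + 1 - k) * (M.choose k) * ((M - k).choose (m + 1 - k))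
          = (M.choose (m + 1) : ℤ) * ((-1 : ℤ) ^ (m + 1) * ((-1 : ℤ) ^ k * ((m + 1).choose k))) := by
        intro k hk
        rw [Finset.mem_range] at hk
        have hk' : k ≤ m + 1 := by omega
        have := Nat.choose_mul (n := M) hk'
        -- M.choose (m+1) * (m+1).choose k = M.choose k * (M - k).choose (m + 1 - k)
        have h1 : ((-1 : ℤ)) ^ (m + 1 - k) * (-1 : ℤ) ^ k = (-1 : ℤ) ^ (m + 1) := by
          rw [← pow_add]; congr 1; omega
        have hsg : ((-1 : ℤ)) ^ (m + 1 - k) = (-1 : ℤ) ^ (m + 1) * (-1 : ℤ) ^ k := by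
          rw [← h1, mul_assoc, ← pow_add,
            (Even.neg_one_pow ⟨k, rfl⟩ : ((-1 : ℤ)) ^ (k + k) = 1), mul_one]
        have hc : (M.choose k : ℤ) * ((M - k).choose (m + 1 - k))
            = (M.choose (m + 1) : ℤ) * ((m + 1).choose k) := by
          exact_mod_cast congrArg (Nat.cast : ℕ → ℤ) this.symm
        rw [hsg]
        linear_combination ((-1 : ℤ) ^ (m + 1) * (-1 : ℤ) ^ k) * hc
      rw [Finset.sum_congr rfl key, ← Finset.mul_sum, ← Finset.mul_sum,
        Int.alternating_sum_range_choose_of_ne (by omega)]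
      ring
    have h2 : ∑ k ∈ Finset.range (m + 2),
        (-1 : ℤ) ^ (m + 1 - k) * (if k = 0 then 0 else (M.choose (k - 1) : ℤ))
          * ((M - k).choose (m + 1 - k)) = 1 := by
      rw [Finset.sum_range_succ' _ (m + 1)]
      simp only [if_neg (Nat.succ_ne_zero _), if_pos rfl, Nat.succ_sub_one]
      have : ∀ k ∈ Finset.range (m + 1),
          (-1 : ℤ) ^ (m + 1 - (k + 1)) * (M.choose k : ℤ) * ((M - (k + 1)).choose (m + 1 - (k + 1)))
          = (-1 : ℤ) ^ (m - k) * (M.choose k) * ((M - 1 - k).choose (m - k)) := by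
        intro k hk
        have e1 : m + 1 - (k + 1) = m - k := by omega
        have e2 : M - (k + 1) = M - 1 - k := by omega
        rw [e1, e2]
      rw [Finset.sum_congr rfl this, ih M hM]
      simp
    rw [h1, h2]
    ring

/-- For all integers `n ≥ 1` and `0 ≤ r ≤ n−1`:
`∑_{j=0}^{r} (−1)^{r−j} C(n−1−j, r−j) · 2^j · C(n,j) = ∑_{i=0}^{r} C(n,i)`. -/
theorem stmt16 (n r : ℕ) (hn : 1 ≤ n) (hr : r ≤ n - 1) :
    ∑ j ∈ Finset.range (r + 1),
        (-1 : ℤ) ^ (r - j) * ((n - 1 - j).choose (r - j)) * 2 ^ j * n.choose j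
      = ∑ i ∈ Finset.range (r + 1), (n.choose i : ℤ) := by
  have expand : ∀ j ∈ Finset.range (r + 1),
      (-1 : ℤ) ^ (r - j) * ((n - 1 - j).choose (r - j)) * 2 ^ j * n.choose j
      = ∑ i ∈ Finset.Ico 0 (j + 1),
          (n.choose i : ℤ) * ((-1 : ℤ) ^ (r - j) * ((n - 1 - j).choose (r - j))
            * ((n - i).choose (j - i))) := by
    intro j hj
    rw [Finset.mem_range] at hj
    have h2j : (2 : ℤ) ^ j * (n.choose j : ℤ) = ∑ i ∈ Finset.Ico 0 (j + 1),
        (n.choose i : ℤ) * ((n - i).choose (j - i)) := by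
      have : ∀ i ∈ Finset.Ico 0 (j + 1),
          (n.choose i : ℤ) * ((n - i).choose (j - i)) = (n.choose j : ℤ) * (j.choose i) := by
        intro i hi
        simp only [Finset.mem_Ico] at hi
        have hij : i ≤ j := by omega
        have hjn : j ≤ n := by omega
        have := Nat.choose_mul (n := n) (k := j) hij
        exact_mod_cast congrArg (Nat.cast : ℕ → ℤ) this.symm
      rw [Finset.sum_congr rfl this, ← Finset.mul_sum]
      have : ∑ i ∈ Finset.Ico 0 (j + 1), (j.choose i : ℤ) = 2 ^ j := by
        rw [Finset.sum_Ico_eq_sum_range]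
        simp only [Nat.sub_zero, Nat.add_zero, Nat.zero_add]
        exact_mod_cast congrArg (Nat.cast : ℕ → ℤ) (Nat.sum_range_choose j)
      rw [this]; ring
    calc (-1 : ℤ) ^ (r - j) * ((n - 1 - j).choose (r - j)) * 2 ^ j * n.choose j
        = ((-1 : ℤ) ^ (r - j) * ((n - 1 - j).choose (r - j))) * ((2:ℤ) ^ j * n.choose j) := by ring
      _ = _ := by
          rw [h2j, Finset.mul_sum]
          exact Finset.sum_congr rfl fun i _ => by ring
  rw [Finset.sum_congr rfl expand]
  have hrange : Finset.range (r + 1) = Finset.Ico 0 (r + 1) := by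
    rw [Finset.range_eq_Ico]
  rw [hrange, ← Finset.sum_Ico_Ico_comm 0 (r + 1)
    (fun i j => (n.choose i : ℤ) * ((-1 : ℤ) ^ (r - j) * ((n - 1 - j).choose (r - j))
      * ((n - i).choose (j - i))))]
  refine Finset.sum_congr rfl fun i hi => ?_
  simp only [Finset.mem_Ico] at hi
  have hi' : i ≤ r := by omega
  have inner : ∑ j ∈ Finset.Ico i (r + 1),
      (n.choose i : ℤ) * ((-1 : ℤ) ^ (r - j) * ((n - 1 - j).choose (r - j))
        * ((n - i).choose (j - i))) = (n.choose i : ℤ) * 1 := by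
    rw [← Finset.mul_sum]
    congr 1
    rw [Finset.sum_Ico_eq_sum_range]
    have : ∀ k ∈ Finset.range (r + 1 - i),
        (-1 : ℤ) ^ (r - (i + k)) * ((n - 1 - (i + k)).choose (r - (i + k)))
          * ((n - i).choose (i + k - i))
        = (-1 : ℤ) ^ ((r - i) - k) * ((n - i).choose k) * (((n - i) - 1 - k).choose ((r - i) - k)) := by
      intro k hk
      have e1 : r - (i + k) = (r - i) - k := by omega
      have e2 : n - 1 - (i + k) = (n - i) - 1 - k := by omega
      have e3 : i + k - i = k := by omega
      rw [e1, e2, e3]; ring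
    rw [Finset.sum_congr rfl this]
    have hcnt : r + 1 - i = (r - i) + 1 := by omega
    rw [hcnt]
    exact aux16 (r - i) (n - i) (by omega)
  rw [inner, mul_one]
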